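/- Let j(x) = π^{-1} ∫₀^∞ e^{-s} (s² + x²)^{-1} ds for real x ≠ 0. Then |x| · j(x) tends to 1/2 as x → 0 (x ≠ 0). -/

import Mathlib

open MeasureTheory Real Filter

lemma geo_key (x : ℝ) (hx : x ≠ 0) :
    |x| * ∫ s in Set.Ioi (0 : ℝ), Real.exp (-s) * (s ^ 2 + x ^ 2)⁻¹
      = ∫ t in Set.Ioi (0 : ℝ), Real.exp (-(|x| * t)) * (1 + t ^ 2)⁻¹ := by
  have hb : (0 : ℝ) < |x| := abs_pos.mpr hx
  have h := integral_comp_mul_left_Ioi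
    (fun s => Real.exp (-s) * (s ^ 2 + x ^ 2)⁻¹) 0 hb
  simp only [mul_zero, smul_eq_mul] at h
  have hx2 : x ^ 2 ≠ 0 := pow_ne_zero _ hx
  have heq : ∀ t ∈ Set.Ioi (0:ℝ),
      Real.exp (-(|x| * t)) * (1 + t ^ 2)⁻¹
        = x ^ 2 * (Real.exp (-(|x| * t)) * ((|x| * t) ^ 2 + x ^ 2)⁻¹) := by
    intro t _
    have : (|x| * t) ^ 2 + x ^ 2 = x ^ 2 * (1 + t ^ 2) := by
      rw [mul_pow, sq_abs]; ring
    rw [this, mul_inv]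
    field_simp
  rw [setIntegral_congr_fun measurableSet_Ioi heq, integral_const_mul, h]
  have h2 : x ^ 2 * |x|⁻¹ = |x| := by
    rw [← sq_abs, sq]
    field_simp
  rw [← mul_assoc, h2]

/-- Small-space asymptotics of the Lévy density of the geometric 1-stable process in
dimension 1: `|x| j(x) → 1/2` as `x → 0`, where
`j(x) = π⁻¹ ∫₀^∞ e^{-s} (s² + x²)⁻¹ ds`. -/
theorem geometric_one_stable_levy_density_small_space :
    Tendsto (fun x : ℝ =>
        |x| * (π⁻¹ * ∫ s in Set.Ioi (0 : ℝ), Real.exp (-s) * (s ^ 2 + x ^ 2)⁻¹))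
      (nhdsWithin 0 {0}ᶜ) (nhds (1 / 2)) := by
  have hF : Tendsto (fun x : ℝ =>
      ∫ t in Set.Ioi (0 : ℝ), Real.exp (-(|x| * t)) * (1 + t ^ 2)⁻¹)
      (nhdsWithin 0 {0}ᶜ) (nhds (∫ t in Set.Ioi (0 : ℝ), (1 + t ^ 2)⁻¹)) := by
    apply tendsto_integral_filter_of_dominated_convergence (fun t => (1 + t ^ 2)⁻¹)
    · filter_upwards with x
      exact ((Real.continuous_exp.comp (by continuity)).mul (Continuous.inv₀ (by continuity) (fun a => by positivity))).aestronglyMeasurable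
    · filter_upwards with x
      filter_upwards [ae_restrict_mem measurableSet_Ioi] with t ht
      have h1 : (0:ℝ) < 1 + t ^ 2 := by positivity
      have h2 : Real.exp (-(|x| * t)) ≤ 1 := by
        rw [Real.exp_le_one_iff]
        have ht' : (0:ℝ) ≤ t := le_of_lt ht
        have : (0:ℝ) ≤ |x| * t := by positivity
        linarith
      rw [Real.norm_eq_abs, abs_mul, abs_of_pos (Real.exp_pos _), abs_of_pos (inv_pos.mpr h1)]
      calc Real.exp (-(|x| * t)) * (1 + t ^ 2)⁻¹ ≤ 1 * (1 + t ^ 2)⁻¹ := by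
            gcongr
        _ = (1 + t ^ 2)⁻¹ := one_mul _
    · exact integrable_inv_one_add_sq.integrableOn
    · filter_upwards with t
      have : Tendsto (fun x : ℝ => Real.exp (-(|x| * t)) * (1 + t ^ 2)⁻¹)
          (nhds 0) (nhds (Real.exp (-(|0| * t)) * (1 + t ^ 2)⁻¹)) := by
        apply ((Real.continuous_exp.comp (by continuity)).mul continuous_const).tendsto
      simpa using this.mono_left nhdsWithin_le_nhds
  have hval : (∫ t in Set.Ioi (0 : ℝ), (1 + t ^ 2)⁻¹) = π / 2 := by
    rw [integral_Ioi_inv_one_add_sq, Real.arctan_zero, sub_zero]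
  rw [hval] at hF
  have := hF.const_mul (π⁻¹)
  have hpi : π⁻¹ * (π / 2) = 1 / 2 := by
    field_simp
  rw [hpi] at this
  apply this.congr'
  filter_upwards [self_mem_nhdsWithin] with x hx
  rw [← geo_key x hx]
  ring
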